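/- arXiv:1403.5116 — 5 statements merged into one kernel-verified Lean document; each statement's English description precedes it below -/
import Mathlib

section
/- Let a > 0 and λ = φ_a(z) = -a((z+1)/(z-1))² for z ∈ 𝔻. Then (√a/4)·d(λ,[0,∞))/(√|λ|·(a+|λ|)) ≤ 1-|z| ≤ 4√a·d(λ,[0,∞))/(√|λ|·(a+|λ|)), where d(λ,[0,∞)) is the distance from λ to the nonnegative real half-axis. -/
lemma my_le_infDist {x : ℂ} {s : Set ℂ} (hs : s.Nonempty) {b : ℝ}
    (h : ∀ y ∈ s, b ≤ dist x y) : b ≤ Metric.infDist x s := by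
  by_contra hb
  push_neg at hb
  obtain ⟨y, hy, hdy⟩ := (Metric.infDist_lt_iff hs).mp hb
  exact absurd (h y hy) (not_le.mpr hdy)

lemma my_aux_hi1 (a p q : ℝ) (h : q^2 ≤ p^2) :
    (-(a*(p^2-q^2)) - 0)^2 + (-(2*a*(p*q)))^2 ≤ 4*a^2*p^2*(p^2+q^2) := by
  nlinarith [mul_nonneg (mul_nonneg (sq_nonneg a) (add_nonneg (sq_nonneg p) (sq_nonneg q))) (sub_nonneg.mpr h),
    mul_nonneg (sq_nonneg a) (mul_nonneg (add_nonneg (sq_nonneg p) (sq_nonneg q)) (sq_nonneg p))]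

lemma my_aux_hi2 (a p q : ℝ) :
    0^2 + (-(2*a*(p*q)))^2 ≤ 4*a^2*p^2*(p^2+q^2) := by
  nlinarith [sq_nonneg (a*p^2)]

lemma my_aux_lo1 (a p q t : ℝ) (ha : 0 ≤ a) (ht : 0 ≤ t) (h : q^2 ≤ p^2) :
    a^2*p^2*(p^2+q^2) ≤ (-(a*(p^2-q^2)) - t)^2 + (-(2*a*(p*q)))^2 := by
  nlinarith [sq_nonneg (a*(p^2-q^2)), mul_nonneg (mul_nonneg ha (sub_nonneg.mpr h)) ht,
    sq_nonneg t, sq_nonneg (a*p*q)]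

lemma my_aux_lo2 (a p q t : ℝ) (h : p^2 ≤ q^2) :
    a^2*p^2*(p^2+q^2) ≤ (-(a*(p^2-q^2)) - t)^2 + (-(2*a*(p*q)))^2 := by
  nlinarith [sq_nonneg (-(a*(p^2-q^2)) - t),
    mul_nonneg (mul_nonneg (sq_nonneg a) (sq_nonneg p)) (sub_nonneg.mpr h),
    mul_nonneg (sq_nonneg a) (sq_nonneg (p*q))]

lemma my_aux_pos (p n s : ℝ) (hn : 0 < n) (hs0 : 0 ≤ s) (hs1 : s < 1)
    (hpn : p * n = 1 - s^2) : 0 < p := by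
  nlinarith [mul_pos hn hn]

lemma my_aux_key0 (p s K n : ℝ) (hn : 0 < n) (hs0 : 0 ≤ s) (hs1 : s < 1)
    (hpn : p * n = 1 - s^2) (h4 : (1+K)*n = 2*(1+s^2)) :
    p ≤ 2*((1-s)*(1+K)) := by
  have h6 : 0 ≤ 1 - s := by linarith
  rw [← mul_le_mul_iff_of_pos_right hn, hpn]
  have h5 : 2*((1-s)*(1+K))*n = 2*(1-s)*((1+K)*n) := by ring
  rw [h5, h4]
  nlinarith [mul_nonneg h6 (sq_nonneg s), mul_nonneg h6 hs0]

lemma my_aux_key1 (p s K n : ℝ) (hn : 0 < n) (hs0 : 0 ≤ s) (hs1 : s < 1)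
    (hpn : p * n = 1 - s^2) (h4 : (1+K)*n = 2*(1+s^2)) :
    (1-s)*(1+K) ≤ 4*p := by
  have h6 : 0 ≤ 1 - s := by linarith
  have h1s2 : 0 ≤ 1 - s^2 := by nlinarith
  rw [← mul_le_mul_iff_of_pos_right hn]
  have h5 : (1-s)*(1+K)*n = (1-s)*((1+K)*n) := by ring
  rw [h5, h4, show 4*p*n = 4*(p*n) by ring, hpn]
  nlinarith [mul_nonneg h6 h1s2, mul_nonneg hs0 h6]

set_option maxHeartbeats 1000000 in
theorem stmt_3 (a : ℝ) (ha : 0 < a) (z : ℂ) (hz : z ∈ Metric.ball (0 : ℂ) 1)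
    (hz1 : z ≠ 1) (hz2 : z ≠ -1) (lam : ℂ)
    (hlam : lam = -(a : ℂ) * ((z + 1) / (z - 1)) ^ 2) :
    Real.sqrt a / 4 * (Metric.infDist lam {w : ℂ | ∃ t : ℝ, 0 ≤ t ∧ w = (t : ℂ)} /
        (Real.sqrt (‖lam‖) * (a + ‖lam‖))) ≤ 1 - ‖z‖ ∧
    1 - ‖z‖ ≤ 4 * Real.sqrt a *
      (Metric.infDist lam {w : ℂ | ∃ t : ℝ, 0 ≤ t ∧ w = (t : ℂ)} /
        (Real.sqrt (‖lam‖) * (a + ‖lam‖))) := by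
  set S : Set ℂ := {w : ℂ | ∃ t : ℝ, 0 ≤ t ∧ w = (t : ℂ)} with hS
  have hSne : S.Nonempty := ⟨(0:ℂ), 0, le_refl 0, by simp⟩
  set s := ‖z‖ with hsdef
  have hs0 : 0 ≤ s := norm_nonneg z
  have hz' : s < 1 := by simpa [Metric.mem_ball, hsdef] using hz
  have h1z : (1:ℂ) - z ≠ 0 := sub_ne_zero.mpr (Ne.symm hz1)
  have hz1' : z - 1 ≠ 0 := sub_ne_zero.mpr hz1
  set u : ℂ := (1+z)/(1-z) with hu
  have hlam' : lam = -(a:ℂ) * u^2 := by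
    rw [hlam]
    congr 1
    rw [hu, div_pow, div_pow, div_eq_div_iff (pow_ne_zero 2 hz1') (pow_ne_zero 2 h1z)]
    ring
  set p := u.re with hpdef
  set q := u.im with hqdef
  set n := Complex.normSq (1-z) with hndef
  set m := Complex.normSq (1+z) with hmdef
  have hn : 0 < n := by rw [hndef]; exact Complex.normSq_pos.mpr h1z
  have hm : 0 ≤ m := Complex.normSq_nonneg _
  have hs2 : s^2 = z.re^2 + z.im^2 := by
    rw [hsdef, Complex.sq_norm, Complex.normSq_apply]; ring
  have hn' : n = (1-z.re)^2 + z.im^2 := by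
    rw [hndef, Complex.normSq_apply]; simp [Complex.sub_re, Complex.sub_im]; ring
  have hm' : m = (1+z.re)^2 + z.im^2 := by
    rw [hmdef, Complex.normSq_apply]; simp [Complex.add_re, Complex.add_im]; ring
  have hmn : m + n = 2*(1+s^2) := by rw [hm', hn', hs2]; ring
  have huz : u * (1-z) = 1+z := div_mul_cancel₀ _ h1z
  have e1 := congrArg Complex.re huz
  have e2 := congrArg Complex.im huz
  simp [Complex.mul_re, Complex.mul_im, Complex.sub_re, Complex.sub_im,
    Complex.add_re, Complex.add_im] at e1 e2
  have hpn : p * n = 1 - s^2 := by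
    rw [hn', hs2]
    linear_combination (1-z.re)*e1 - z.im*e2
  clear e1 e2
  have hp : 0 < p := my_aux_pos p n s hn hs0 hz' hpn
  set K := p^2+q^2 with hK
  have hKpos : 0 < K := by positivity
  have hKn : K * n = m := by
    have h1 : Complex.normSq u = m / n := by rw [hu, map_div₀, ← hmdef, ← hndef]
    have h2 : K = Complex.normSq u := by rw [Complex.normSq_apply, ← hpdef, ← hqdef, hK]; ring
    rw [h2, h1, div_mul_cancel₀ _ hn.ne']
  have hre : lam.re = -(a*(p^2-q^2)) := by
    rw [hlam', pow_two, hpdef, hqdef]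
    simp only [Complex.mul_re, Complex.mul_im, Complex.neg_re, Complex.neg_im,
      Complex.ofReal_re, Complex.ofReal_im]
    ring
  have him : lam.im = -(2*a*(p*q)) := by
    rw [hlam', pow_two, hpdef, hqdef]
    simp only [Complex.mul_re, Complex.mul_im, Complex.neg_re, Complex.neg_im,
      Complex.ofReal_re, Complex.ofReal_im]
    ring
  have hnsq : Complex.normSq lam = (a*K)^2 := by
    rw [Complex.normSq_apply, ← pow_two, ← pow_two, hre, him, hK]; ring
  have habs : ‖lam‖ = a * K := by
    rw [Complex.norm_def, hnsq, Real.sqrt_sq (by positivity)]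
  set ρ := Real.sqrt K with hρ
  have hρpos : 0 < ρ := Real.sqrt_pos.mpr hKpos
  have hρ2 : ρ^2 = K := Real.sq_sqrt hKpos.le
  have hsqla : Real.sqrt (‖lam‖) = Real.sqrt a * ρ := by
    rw [habs, Real.sqrt_mul ha.le, hρ]
  set d := Metric.infDist lam S with hd
  have hdistform : ∀ t : ℝ, dist lam (t:ℂ) = Real.sqrt ((lam.re - t)^2 + lam.im^2) := by
    intro t
    rw [Complex.dist_eq, Complex.norm_def, Complex.normSq_apply]
    simp only [Complex.sub_re, Complex.sub_im, Complex.ofReal_re, Complex.ofReal_im]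
    ring_nf
  have hd_hi : d ≤ 2*a*(p*ρ) := by
    have hmem : ((max lam.re 0 : ℝ) : ℂ) ∈ S := ⟨max lam.re 0, le_max_right _ _, rfl⟩
    refine le_trans (Metric.infDist_le_dist_of_mem hmem) ?_
    rw [hdistform]
    rw [Real.sqrt_le_left (by positivity)]
    have h2 : (2*a*(p*ρ))^2 = 4*a^2*p^2*(p^2+q^2) := by
      rw [show (2*a*(p*ρ))^2 = 4*a^2*p^2*ρ^2 by ring, hρ2, hK]
    rw [h2]
    rcases le_total (q^2) (p^2) with h | h
    · have hle : lam.re ≤ 0 := by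
        rw [hre]
        have : 0 ≤ a*(p^2-q^2) := mul_nonneg ha.le (sub_nonneg.mpr h)
        linarith
      rw [max_eq_right hle, hre, him]
      exact my_aux_hi1 a p q h
    · have hge : 0 ≤ lam.re := by
        rw [hre]
        have : a*(p^2-q^2) ≤ 0 := mul_nonpos_of_nonneg_of_nonpos ha.le (by linarith)
        linarith
      rw [max_eq_left hge, sub_self, him]
      exact my_aux_hi2 a p q
  have hd_lo : a*(p*ρ) ≤ d := by
    apply my_le_infDist hSne
    rintro y ⟨t, ht, rfl⟩
    rw [hdistform]
    rw [Real.le_sqrt (by positivity) (by positivity)]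
    have h2 : (a*(p*ρ))^2 = a^2*p^2*(p^2+q^2) := by
      rw [show (a*(p*ρ))^2 = a^2*p^2*ρ^2 by ring, hρ2, hK]
    rw [h2, hre, him]
    rcases le_total (q^2) (p^2) with h | h
    · exact my_aux_lo1 a p q t ha.le ht h
    · exact my_aux_lo2 a p q t h
  have h4 : (1+K)*n = 2*(1+s^2) := by
    have he : (1+K)*n = n + K*n := by ring
    rw [he, hKn]; linarith
  have hkey0 : p ≤ 2*((1-s)*(1+K)) := my_aux_key0 p s K n hn hs0 hz' hpn h4
  have hkey1 : (1-s)*(1+K) ≤ 4*p := my_aux_key1 p s K n hn hs0 hz' hpn h4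
  have hsa : 0 < Real.sqrt a := Real.sqrt_pos.mpr ha
  have hden : 0 < ρ*(a+a*K) := by positivity
  constructor
  · have hL : Real.sqrt a / 4 * (d / (Real.sqrt (‖lam‖) * (a + ‖lam‖)))
        = d / (4*(ρ*(a+a*K))) := by
      rw [hsqla, habs]
      field_simp
    rw [hL, div_le_iff₀ (by positivity)]
    calc d ≤ 2*a*(p*ρ) := hd_hi
      _ = (2*a*ρ)*p := by ring
      _ ≤ (2*a*ρ)*(2*((1-s)*(1+K))) := by
          apply mul_le_mul_of_nonneg_left hkey0 (by positivity)
      _ = (1-s)*(4*(ρ*(a+a*K))) := by ring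
  · have hR : 4 * Real.sqrt a * (d / (Real.sqrt (‖lam‖) * (a + ‖lam‖)))
        = 4*d / (ρ*(a+a*K)) := by
      rw [hsqla, habs]
      field_simp
    rw [hR, le_div_iff₀ hden]
    calc (1-s)*(ρ*(a+a*K)) = (a*ρ)*((1-s)*(1+K)) := by ring
      _ ≤ (a*ρ)*(4*p) := mul_le_mul_of_nonneg_left hkey1 (by positivity)
      _ = 4*(a*(p*ρ)) := by ring
      _ ≤ 4*d := by
          have := mul_le_mul_of_nonneg_left hd_lo (by norm_num : (0:ℝ) ≤ 4)
          linarith [this]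
end

section
/- Let d ≥ 1, s > 0, p > d/(2s), and let λ ∈ ℂ with Re(λ) < 0. Then ∫₀^∞ r^(d-1)/|r^(2s) - λ|^p dr ≤ (1/(2s))·(∫₀^∞ t^(d/(2s)-1)/(t²+1)^(p/2) dt)·|λ|^(d/(2s)-1)/|λ|^(p-1). -/
open MeasureTheory Set Real

lemma gMeas (a p : ℝ) :
    Measurable (fun t : ℝ => t ^ (a - 1) / (t ^ 2 + 1) ^ (p / 2)) := by
  fun_prop

lemma gInt (a p : ℝ) (ha : 0 < a) (hap : a < p) :
    IntegrableOn (fun t : ℝ => t ^ (a - 1) / (t ^ 2 + 1) ^ (p / 2)) (Set.Ioi 0) := by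
  have hp : 0 < p := ha.trans hap
  have h1 : IntegrableOn (fun t : ℝ => t ^ (a - 1) / (t ^ 2 + 1) ^ (p / 2)) (Set.Ioc 0 1) := by
    have hbase : IntegrableOn (fun t : ℝ => t ^ (a - 1)) (Set.Ioc 0 1) := by
      have := intervalIntegral.intervalIntegrable_rpow' (a := 0) (b := 1) (r := a - 1) (by linarith)
      rwa [intervalIntegrable_iff_integrableOn_Ioc_of_le zero_le_one] at this
    refine hbase.mono' ((gMeas a p).aestronglyMeasurable) ?_
    filter_upwards [ae_restrict_mem measurableSet_Ioc] with t ht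
    have ht0 : 0 < t := ht.1
    have hnum : 0 ≤ t ^ (a - 1) := rpow_nonneg ht0.le _
    have hden : (1 : ℝ) ≤ (t ^ 2 + 1) ^ (p / 2) :=
      one_le_rpow (by nlinarith) (by positivity)
    rw [Real.norm_eq_abs, abs_of_nonneg (div_nonneg hnum (by positivity))]
    calc t ^ (a - 1) / (t ^ 2 + 1) ^ (p / 2) ≤ t ^ (a - 1) / 1 :=
          div_le_div_of_nonneg_left hnum (by norm_num) hden
      _ = t ^ (a - 1) := by ring
  have h2 : IntegrableOn (fun t : ℝ => t ^ (a - 1) / (t ^ 2 + 1) ^ (p / 2)) (Set.Ioi 1) := by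
    have hbase : IntegrableOn (fun t : ℝ => t ^ (a - 1 - p)) (Set.Ioi 1) :=
      integrableOn_Ioi_rpow_of_lt (by linarith) one_pos
    refine hbase.mono' ((gMeas a p).aestronglyMeasurable) ?_
    filter_upwards [ae_restrict_mem measurableSet_Ioi] with t ht
    have ht0 : (0:ℝ) < t := lt_trans one_pos ht
    have hnum : 0 ≤ t ^ (a - 1) := rpow_nonneg ht0.le _
    have hd1 : t ^ p ≤ (t ^ 2 + 1) ^ (p / 2) := by
      have h : (t ^ 2 : ℝ) ≤ t ^ 2 + 1 := by linarith
      have := rpow_le_rpow (by positivity) h (by positivity : (0:ℝ) ≤ p / 2)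
      calc t ^ p = (t ^ 2 : ℝ) ^ (p / 2) := by
            rw [← Real.rpow_natCast t 2, ← Real.rpow_mul ht0.le]
            congr 1; ring
        _ ≤ (t ^ 2 + 1) ^ (p / 2) := this
    have htp : (0:ℝ) < t ^ p := rpow_pos_of_pos ht0 _
    rw [Real.norm_eq_abs, abs_of_nonneg (div_nonneg hnum (by positivity))]
    calc t ^ (a - 1) / (t ^ 2 + 1) ^ (p / 2) ≤ t ^ (a - 1) / t ^ p :=
          div_le_div_of_nonneg_left hnum htp hd1
      _ = t ^ (a - 1 - p) := by rw [← Real.rpow_sub ht0]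
  have := h1.union h2
  rwa [Set.Ioc_union_Ioi_eq_Ioi zero_le_one] at this

theorem stmt_6 (d : ℕ) (hd : 1 ≤ d) (s p : ℝ) (hs : 0 < s) (hp : (d : ℝ) / (2 * s) < p)
    (lam : ℂ) (hre : lam.re < 0) :
    ∫ r in Set.Ioi (0 : ℝ), r ^ ((d : ℝ) - 1) / ‖((r ^ (2 * s) : ℝ) : ℂ) - lam‖ ^ p ≤
      1 / (2 * s) * (∫ t in Set.Ioi (0 : ℝ), t ^ ((d : ℝ) / (2 * s) - 1) / (t ^ 2 + 1) ^ (p / 2)) *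
        ‖lam‖ ^ ((d : ℝ) / (2 * s) - 1) / ‖lam‖ ^ (p - 1) := by
  have hlam0 : lam ≠ 0 := by
    intro h; rw [h] at hre; simp at hre
  set A : ℝ := ‖lam‖ with hA
  have hApos : 0 < A := norm_pos_iff.mpr hlam0
  have hs2 : (0:ℝ) < 2 * s := by linarith
  have hdpos : (0:ℝ) < (d:ℝ) := by exact_mod_cast hd
  set a : ℝ := (d:ℝ) / (2*s) with ha_def
  have hapos : 0 < a := div_pos hdpos hs2
  have hppos : 0 < p := hapos.trans hp
  have h2sa : 2 * s * a = (d:ℝ) := by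
    rw [ha_def]; field_simp
  -- Step 1 : substitution y = r ^ (2s)
  have step1 : (∫ r in Set.Ioi (0:ℝ), r ^ ((d:ℝ)-1) / ‖((r ^ (2*s) : ℝ) : ℂ) - lam‖ ^ p)
      = ∫ y in Set.Ioi (0:ℝ), (1/(2*s)) * (y ^ (a-1) / ‖(y:ℂ) - lam‖ ^ p) := by
    rw [← integral_comp_rpow_Ioi
      (fun y => (1/(2*s)) * (y ^ (a-1) / ‖(y:ℂ) - lam‖ ^ p)) (ne_of_gt hs2)]
    refine setIntegral_congr_fun measurableSet_Ioi ?_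
    intro x hx
    have hx0 : (0:ℝ) < x := hx
    have h1 : (x ^ (2*s)) ^ (a - 1) = x ^ ((d:ℝ) - 2*s) := by
      rw [← Real.rpow_mul hx0.le]
      congr 1
      nlinarith [h2sa]
    have h2 : x ^ (2*s-1) * x ^ ((d:ℝ)-2*s) = x ^ ((d:ℝ)-1) := by
      rw [← Real.rpow_add hx0]; congr 1; ring
    have hD : (0:ℝ) ≤ ‖((x ^ (2*s) : ℝ) : ℂ) - lam‖ ^ p :=
      Real.rpow_nonneg (norm_nonneg _) _
    simp only
    rw [smul_eq_mul, abs_of_pos hs2, h1]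
    rw [show (2*s) * x ^ (2*s-1) * (1/(2*s) * (x ^ ((d:ℝ)-2*s) / ‖((x ^ (2*s):ℝ):ℂ) - lam‖ ^ p))
        = ((2*s) * (1/(2*s))) * ((x ^ (2*s-1) * x ^ ((d:ℝ)-2*s)) / ‖((x ^ (2*s):ℝ):ℂ) - lam‖ ^ p)
      from by ring, h2, mul_one_div, div_self (ne_of_gt hs2), one_mul]
  -- Step 2 : scaling y = A * t
  have step2 := integral_comp_mul_left_Ioi
    (fun y : ℝ => y ^ (a-1) / ‖(y:ℂ) - lam‖ ^ p) 0 hApos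
  simp only [mul_zero, smul_eq_mul] at step2
  -- Step 3 : pointwise bound and monotonicity
  have key : (∫ t in Set.Ioi (0:ℝ), (A*t) ^ (a-1) / ‖((A*t : ℝ):ℂ) - lam‖ ^ p)
      ≤ A ^ (a-1-p) * ∫ t in Set.Ioi (0:ℝ), t ^ (a-1) / (t^2+1) ^ (p/2) := by
    rw [← integral_const_mul]
    apply integral_mono_of_nonneg
    · filter_upwards [ae_restrict_mem measurableSet_Ioi] with t ht
      have hAt : 0 < A * t := mul_pos hApos ht
      exact div_nonneg (Real.rpow_nonneg hAt.le _)
        (Real.rpow_nonneg (norm_nonneg _) _)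
    · exact (gInt a p hapos hp).const_mul _
    · filter_upwards [ae_restrict_mem measurableSet_Ioi] with t ht
      have ht0 : (0:ℝ) < t := ht
      have hAt : 0 < A * t := mul_pos hApos ht0
      have hre2 : (A*t - lam.re)^2 + lam.im^2 = Complex.normSq (((A*t : ℝ):ℂ) - lam) := by
        simp [Complex.normSq_apply, Complex.sub_re, Complex.sub_im]
        ring
      have hA2 : A^2 = lam.re^2 + lam.im^2 := by
        rw [hA, Complex.sq_norm, Complex.normSq_apply]; ring
      have hineq : (A * Real.sqrt (t^2+1))^2 ≤ Complex.normSq (((A*t : ℝ):ℂ) - lam) := by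
        rw [← hre2, mul_pow, Real.sq_sqrt (by positivity)]
        nlinarith [mul_pos hApos ht0, hre, hA2]
      have habs : A * Real.sqrt (t^2+1) ≤ ‖((A*t : ℝ):ℂ) - lam‖ := by
        calc A * Real.sqrt (t^2+1) = Real.sqrt ((A * Real.sqrt (t^2+1))^2) :=
              (Real.sqrt_sq (by positivity)).symm
          _ ≤ Real.sqrt (Complex.normSq (((A*t : ℝ):ℂ) - lam)) := Real.sqrt_le_sqrt hineq
          _ = ‖((A*t : ℝ):ℂ) - lam‖ := (Complex.norm_def _).symm
      have hsq : ((t:ℝ)^2+1) ^ (p/2) = (Real.sqrt (t^2+1)) ^ p := by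
        rw [Real.sqrt_eq_rpow, ← Real.rpow_mul (by positivity)]
        congr 1; ring
      have hb1 : A ^ p * (t^2+1) ^ (p/2) ≤ ‖((A*t : ℝ):ℂ) - lam‖ ^ p := by
        calc A ^ p * (t^2+1) ^ (p/2) = (A * Real.sqrt (t^2+1)) ^ p := by
              rw [hsq, Real.mul_rpow hApos.le (Real.sqrt_nonneg _)]
          _ ≤ ‖((A*t : ℝ):ℂ) - lam‖ ^ p :=
              Real.rpow_le_rpow (by positivity) habs hppos.le
      have hden : (0:ℝ) < A ^ p * (t^2+1) ^ (p/2) := by positivity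
      calc (A*t) ^ (a-1) / ‖((A*t : ℝ):ℂ) - lam‖ ^ p
          ≤ (A*t) ^ (a-1) / (A ^ p * (t^2+1) ^ (p/2)) :=
            div_le_div_of_nonneg_left (Real.rpow_nonneg hAt.le _) hden hb1
        _ = A ^ (a-1-p) * (t ^ (a-1) / (t^2+1) ^ (p/2)) := by
            rw [Real.mul_rpow hApos.le ht0.le, mul_div_mul_comm, ← Real.rpow_sub hApos]
  -- Assemble
  have e1 : A * A ^ (a-1-p) = A ^ (a-1) / A ^ (p-1) := by
    calc A * A ^ (a-1-p) = A ^ (1:ℝ) * A ^ (a-1-p) := by rw [Real.rpow_one]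
      _ = A ^ (1+(a-1-p)) := (Real.rpow_add hApos _ _).symm
      _ = A ^ ((a-1)-(p-1)) := by congr 1; ring
      _ = A ^ (a-1) / A ^ (p-1) := Real.rpow_sub hApos _ _
  have hgnn : (0:ℝ) ≤ ∫ t in Set.Ioi (0:ℝ), t ^ (a-1) / (t^2+1) ^ (p/2) := by
    apply setIntegral_nonneg measurableSet_Ioi
    intro t ht
    exact div_nonneg (Real.rpow_nonneg (le_of_lt ht) _) (Real.rpow_nonneg (by positivity) _)
  calc (∫ r in Set.Ioi (0:ℝ), r ^ ((d:ℝ)-1) / ‖((r ^ (2*s) : ℝ) : ℂ) - lam‖ ^ p)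
      = (1/(2*s)) * ∫ y in Set.Ioi (0:ℝ), y ^ (a-1) / ‖(y:ℂ) - lam‖ ^ p := by
        rw [step1, integral_const_mul]
    _ = (1/(2*s)) * (A * ∫ t in Set.Ioi (0:ℝ),
          (A*t) ^ (a-1) / ‖((A*t : ℝ):ℂ) - lam‖ ^ p) := by
        rw [step2, ← mul_assoc A, mul_inv_cancel₀ hApos.ne', one_mul]
    _ ≤ (1/(2*s)) * (A * (A ^ (a-1-p) * ∫ t in Set.Ioi (0:ℝ), t ^ (a-1) / (t^2+1) ^ (p/2))) := by
        apply mul_le_mul_of_nonneg_left _ (one_div_nonneg.mpr hs2.le)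
        exact mul_le_mul_of_nonneg_left key hApos.le
    _ = 1 / (2 * s) * (∫ t in Set.Ioi (0:ℝ), t ^ (a-1) / (t ^ 2 + 1) ^ (p / 2)) *
        A ^ (a - 1) / A ^ (p - 1) := by
        rw [← mul_assoc A, e1]
        ring
end

section
/- Let d ≥ 1, 0 < s ≤ d/2, p > d/(2s), and λ = λ₀ + iλ₁ ∈ ℂ \ [0,∞). Then there is a constant K depending only on d, p, s such that ∫₀^∞ r^(d-1)/|r^(2s) - λ|^p dr ≤ K · |λ|^(d/(2s)-1)/d(λ,[0,∞))^(p-1). -/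
open MeasureTheory Set Real

lemma pieceA7 {δ p c a b : ℝ} (hδ : 0 < δ) (hp : 1 < p) (hab : a ≤ b) (hbc : b ≤ c) :
    ∫ u in a..b, (δ + (c - u)) ^ (-p) ≤ δ ^ (1 - p) / (p - 1) := by
  have hpos : ∀ u ∈ uIcc a b, 0 < δ + (c - u) := by
    intro u hu
    rw [uIcc_of_le hab] at hu
    have := hu.2
    nlinarith
  have hderiv : ∀ u ∈ uIcc a b,
      HasDerivAt (fun u => (δ + (c - u)) ^ (1 - p) / (p - 1)) ((δ + (c - u)) ^ (-p)) u := by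
    intro u hu
    have h1 : HasDerivAt (fun u : ℝ => δ + (c - u)) (-1) u := by
      simpa using (hasDerivAt_id u).const_sub c |>.const_add δ
    have h2 := (h1.rpow_const (p := 1 - p) (Or.inl (hpos u hu).ne')).div_const (p - 1)
    refine h2.congr_deriv ?_
    have : (1 : ℝ) - p - 1 = -p := by ring
    rw [this]
    have hne : p - 1 ≠ 0 := by linarith
    field_simp
    try ring
  have hint : IntervalIntegrable (fun u => (δ + (c - u)) ^ (-p)) volume a b := by
    apply ContinuousOn.intervalIntegrable
    apply ContinuousOn.rpow_const
    · exact (continuousOn_const.add (continuousOn_const.sub continuousOn_id))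
    · exact fun u hu => Or.inl (hpos u hu).ne'
  rw [intervalIntegral.integral_eq_sub_of_hasDerivAt hderiv hint]
  have h1 : (δ + (c - b)) ^ (1 - p) ≤ δ ^ (1 - p) := by
    apply Real.rpow_le_rpow_of_nonpos hδ (by nlinarith) (by linarith)
  have h2 : 0 ≤ (δ + (c - a)) ^ (1 - p) := Real.rpow_nonneg (by nlinarith) _
  have hp1 : 0 < p - 1 := by linarith
  rw [div_sub_div_same, div_le_div_iff₀ hp1 hp1]
  nlinarith

lemma pieceB7 {δ p c a b : ℝ} (hδ : 0 < δ) (hp : 1 < p) (hab : a ≤ b) (hca : c ≤ a) :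
    ∫ u in a..b, (δ + (u - c)) ^ (-p) ≤ δ ^ (1 - p) / (p - 1) := by
  have hpos : ∀ u ∈ uIcc a b, 0 < δ + (u - c) := by
    intro u hu
    rw [uIcc_of_le hab] at hu
    have := hu.1
    nlinarith
  have hderiv : ∀ u ∈ uIcc a b,
      HasDerivAt (fun u => -((δ + (u - c)) ^ (1 - p) / (p - 1))) ((δ + (u - c)) ^ (-p)) u := by
    intro u hu
    have h1 : HasDerivAt (fun u : ℝ => δ + (u - c)) 1 u := by
      simpa using ((hasDerivAt_id u).sub_const c).const_add δ
    have h2 := (((h1.rpow_const (p := 1 - p) (Or.inl (hpos u hu).ne')).div_const (p - 1)).neg)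
    refine h2.congr_deriv ?_
    have : (1 : ℝ) - p - 1 = -p := by ring
    rw [this]
    have hne : p - 1 ≠ 0 := by linarith
    field_simp
    try ring
  have hint : IntervalIntegrable (fun u => (δ + (u - c)) ^ (-p)) volume a b := by
    apply ContinuousOn.intervalIntegrable
    apply ContinuousOn.rpow_const
    · exact (continuousOn_const.add (continuousOn_id.sub continuousOn_const))
    · exact fun u hu => Or.inl (hpos u hu).ne'
  rw [intervalIntegral.integral_eq_sub_of_hasDerivAt hderiv hint]
  have h1 : (δ + (a - c)) ^ (1 - p) ≤ δ ^ (1 - p) := by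
    apply Real.rpow_le_rpow_of_nonpos hδ (by nlinarith) (by linarith)
  have h2 : 0 ≤ (δ + (b - c)) ^ (1 - p) := Real.rpow_nonneg (by nlinarith) _
  have hp1 : 0 < p - 1 := by linarith
  rw [neg_sub_neg, div_sub_div_same, div_le_div_iff₀ hp1 hp1]
  nlinarith

lemma nearInt7 {δ M p : ℝ} (hδ : 0 < δ) (hM : 0 < M) (hp : 1 < p) :
    ∫ u in Set.Ioc (0:ℝ) (2*M), (δ + |u - M|) ^ (-p) ≤ 2 * (δ ^ (1-p) / (p-1)) := by
  have hcont : Continuous fun u : ℝ => (δ + |u - M|) ^ (-p) :=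
    (continuous_const.add ((continuous_id.sub continuous_const).abs)).rpow_const
      fun u => Or.inl (add_pos_of_pos_of_nonneg hδ (abs_nonneg _)).ne'
  have hsplit : ∫ u in Ioc (0:ℝ) (2*M), (δ + |u - M|) ^ (-p) =
      (∫ u in Ioc (0:ℝ) M, (δ + |u - M|) ^ (-p)) +
        ∫ u in Ioc M (2*M), (δ + |u - M|) ^ (-p) := by
    rw [← setIntegral_union (Set.Ioc_disjoint_Ioc_of_le le_rfl) measurableSet_Ioc
      hcont.integrableOn_Ioc hcont.integrableOn_Ioc, Set.Ioc_union_Ioc_eq_Ioc hM.le (by linarith)]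
  have hpc1 : ∫ u in Ioc (0:ℝ) M, (δ + |u - M|) ^ (-p) ≤ δ ^ (1-p) / (p-1) := by
    have e : ∫ u in Ioc (0:ℝ) M, (δ + |u - M|) ^ (-p)
        = ∫ u in Ioc (0:ℝ) M, (δ + (M - u)) ^ (-p) := by
      apply setIntegral_congr_fun measurableSet_Ioc
      intro u hu
      have h : |u - M| = M - u := by
        rw [abs_sub_comm]
        exact abs_of_nonneg (by linarith [hu.2])
      dsimp only
      rw [h]
    rw [e, ← intervalIntegral.integral_of_le hM.le]
    exact pieceA7 hδ hp hM.le le_rfl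
  have hpc2 : ∫ u in Ioc M (2*M), (δ + |u - M|) ^ (-p) ≤ δ ^ (1-p) / (p-1) := by
    have e : ∫ u in Ioc M (2*M), (δ + |u - M|) ^ (-p)
        = ∫ u in Ioc M (2*M), (δ + (u - M)) ^ (-p) := by
      apply setIntegral_congr_fun measurableSet_Ioc
      intro u hu
      dsimp only
      rw [abs_of_nonneg (by linarith [hu.1] : (0:ℝ) ≤ u - M)]
    rw [e, ← intervalIntegral.integral_of_le (by linarith)]
    exact pieceB7 hδ hp (by linarith) le_rfl
  rw [hsplit]
  linarith

set_option maxHeartbeats 1000000 in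
theorem stmt_7 (d : ℕ) (hd : 1 ≤ d) (s p : ℝ) (hs : 0 < s) (hsd : s ≤ (d : ℝ) / 2)
    (hp : (d : ℝ) / (2 * s) < p) :
    ∃ K : ℝ, ∀ lam : ℂ, (¬ ∃ t : ℝ, 0 ≤ t ∧ (t : ℂ) = lam) →
      ∫ r in Set.Ioi (0 : ℝ), r ^ ((d : ℝ) - 1) / ‖((r ^ (2 * s) : ℝ) : ℂ) - lam‖ ^ p ≤
        K * ‖lam‖ ^ ((d : ℝ) / (2 * s) - 1) /
          Metric.infDist lam {w : ℂ | ∃ t : ℝ, 0 ≤ t ∧ w = (t : ℂ)} ^ (p - 1) := by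
  have h2s : (0:ℝ) < 2 * s := by linarith
  set α : ℝ := (d : ℝ) / (2 * s) with hαdef
  have hα1 : 1 ≤ α := by
    rw [hαdef, le_div_iff₀ h2s]
    linarith
  have hp1 : 1 < p := lt_of_le_of_lt hα1 hp
  have hαp : α < p := hp
  have hp0 : (0:ℝ) < p := by linarith
  refine ⟨(1/(2*s)) * (2^p * (2^(α-1) * (2/(p-1)) + 2^p * 2^(α-p) / (p-α))), ?_⟩
  intro lam hlam
  set S : Set ℂ := {w : ℂ | ∃ t : ℝ, 0 ≤ t ∧ w = (t : ℂ)} with hSdef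
  have hS0 : (0:ℂ) ∈ S := ⟨0, le_rfl, by simp⟩
  have hlamS : lam ∉ S := by
    intro ⟨t, ht, hw⟩
    exact hlam ⟨t, ht, hw.symm⟩
  have hSclosed : IsClosed S := by
    have : S = (fun t : ℝ => (t:ℂ)) '' Ici 0 := by
      ext w
      constructor
      · rintro ⟨t, ht, rfl⟩; exact ⟨t, ht, rfl⟩
      · rintro ⟨t, ht, rfl⟩; exact ⟨t, ht, rfl⟩
    rw [this]
    exact Complex.isometry_ofReal.isClosedEmbedding.isClosedMap _ isClosed_Ici
  set δ : ℝ := Metric.infDist lam S with hδdef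
  set M : ℝ := ‖lam‖ with hMdef
  have hδpos : 0 < δ := (hSclosed.notMem_iff_infDist_pos ⟨0, hS0⟩).1 hlamS
  have hδM : δ ≤ M := by
    have := Metric.infDist_le_dist_of_mem (x := lam) hS0
    simpa [Complex.dist_eq, hMdef] using this
  have hM : 0 < M := lt_of_lt_of_le hδpos hδM
  -- the model function
  set G : ℝ → ℝ := fun u => u ^ (α-1) * (δ + |u - M|) ^ (-p) with hGdef
  set g : ℝ → ℝ := fun u => u ^ (α-1) / ‖(u:ℂ) - lam‖ ^ p with hgdef
  have hcont_pow : Continuous fun u : ℝ => u ^ (α-1) :=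
    continuous_iff_continuousAt.2 fun x => Real.continuousAt_rpow_const x _ (Or.inr (by linarith))
  have hcont_den : Continuous fun u : ℝ => (δ + |u - M|) ^ (-p) :=
    (continuous_const.add ((continuous_id.sub continuous_const).abs)).rpow_const
      fun u => Or.inl (add_pos_of_pos_of_nonneg hδpos (abs_nonneg _)).ne'
  have hGcont : Continuous G := hcont_pow.mul hcont_den
  -- pointwise tail bound
  have hGle : ∀ u ∈ Ioi (2*M), G u ≤ 2^p * u ^ (α-1-p) := by
    intro u hu
    have hu2 : 2*M < u := hu
    have hu0 : 0 < u := by linarith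
    have habs : |u - M| = u - M := abs_of_nonneg (by linarith)
    have hden : u/2 ≤ δ + |u - M| := by rw [habs]; linarith
    have h1 : (δ + |u - M|) ^ (-p) ≤ (u/2) ^ (-p) :=
      Real.rpow_le_rpow_of_nonpos (by positivity) hden (by linarith)
    have h2 : (u/2 : ℝ) ^ (-p) = u ^ (-p) * 2^p := by
      rw [Real.div_rpow hu0.le (by norm_num : (0:ℝ) ≤ 2), Real.rpow_neg (by norm_num : (0:ℝ) ≤ 2),
        div_eq_mul_inv, inv_inv]
    have h3 : u ^ (α-1) * (u ^ (-p) * 2^p) = 2^p * u ^ (α-1-p) := by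
      have e := Real.rpow_add hu0 (α-1) (-p)
      rw [show α - 1 + -p = α - 1 - p from by ring] at e
      rw [e]
      ring
    calc G u ≤ u ^ (α-1) * ((u/2) ^ (-p)) := by
          exact mul_le_mul_of_nonneg_left h1 (Real.rpow_nonneg hu0.le _)
      _ = 2^p * u ^ (α-1-p) := by rw [h2]; exact h3
  -- integrability
  have hbound : IntegrableOn (fun u : ℝ => 2^p * u ^ (α-1-p)) (Ioi (2*M)) :=
    (integrableOn_Ioi_rpow_of_lt (by linarith) (by linarith)).const_mul _
  have hGi1 : IntegrableOn G (Ioc 0 (2*M)) := hGcont.integrableOn_Ioc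
  have hGi2 : IntegrableOn G (Ioi (2*M)) := by
    apply Integrable.mono' hbound (hGcont.aestronglyMeasurable.restrict)
    filter_upwards [ae_restrict_mem measurableSet_Ioi] with u hu
    have hu0 : 0 < u := by have : 2*M < u := hu; linarith
    have : ‖G u‖ = G u := by
      apply norm_of_nonneg
      exact mul_nonneg (Real.rpow_nonneg hu0.le _) (Real.rpow_nonneg (by positivity) _)
    rw [this]
    exact hGle u hu
  have hGint : IntegrableOn G (Ioi 0) := by
    rw [← Set.Ioc_union_Ioi_eq_Ioi (by linarith : (0:ℝ) ≤ 2*M)]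
    exact hGi1.union hGi2
  -- pointwise comparison on Ioi 0
  have hg_le : ∀ u ∈ Ioi (0:ℝ), g u ≤ 2^p * G u := by
    intro u hu
    have hu0 : 0 < u := hu
    set A : ℝ := ‖(u:ℂ) - lam‖ with hAdef
    have hne : (u:ℂ) - lam ≠ 0 := by
      intro h
      exact hlamS ⟨u, hu0.le, (sub_eq_zero.1 h).symm⟩
    have hA : 0 < A := norm_pos_iff.mpr hne
    have h1 : δ ≤ A := by
      have hmem : ((u:ℝ):ℂ) ∈ S := ⟨u, hu0.le, rfl⟩
      have h := Metric.infDist_le_dist_of_mem (x := lam) hmem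
      rwa [Complex.dist_eq, norm_sub_rev] at h
    have h2 : |u - M| ≤ A := by
      have h := abs_norm_sub_norm_le ((u:ℝ):ℂ) lam
      rwa [Complex.norm_real, Real.norm_eq_abs, abs_of_pos hu0] at h
    have hsum : δ + |u - M| ≤ 2 * A := by linarith
    have hBpos : (0:ℝ) < (δ + |u - M|) ^ p := Real.rpow_pos_of_pos (by positivity) p
    have hApos : (0:ℝ) < A ^ p := Real.rpow_pos_of_pos hA p
    have hBle : (δ + |u - M|) ^ p ≤ 2^p * A ^ p := by
      calc (δ + |u - M|) ^ p ≤ (2*A) ^ p :=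
            Real.rpow_le_rpow (by positivity) hsum hp0.le
        _ = 2^p * A ^ p := Real.mul_rpow (by norm_num) hA.le
    have hinv : (A ^ p)⁻¹ ≤ 2^p * ((δ + |u - M|) ^ p)⁻¹ := by
      have := (div_le_div_iff₀ hApos hBpos).2 (by nlinarith : 1 * (δ + |u - M|) ^ p ≤ 2^p * A^p)
      rwa [one_div, div_eq_mul_inv] at this
    have : g u = u ^ (α-1) * (A ^ p)⁻¹ := by rw [hgdef]; simp [div_eq_mul_inv, hAdef]
    rw [this, hGdef]
    have hrw : (δ + |u - M|) ^ (-p) = ((δ + |u - M|) ^ p)⁻¹ :=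
      Real.rpow_neg (by positivity) p
    simp only [hrw]
    calc u ^ (α-1) * (A ^ p)⁻¹ ≤ u ^ (α-1) * (2^p * ((δ + |u - M|) ^ p)⁻¹) :=
          mul_le_mul_of_nonneg_left hinv (Real.rpow_nonneg hu0.le _)
      _ = 2^p * (u ^ (α-1) * ((δ + |u - M|) ^ p)⁻¹) := by ring
  -- change of variables
  have hcv := integral_comp_rpow_Ioi g (p := 2*s) h2s.ne'
  have hcong : ∀ x ∈ Ioi (0:ℝ), (|2*s| * x ^ (2*s-1)) • g (x ^ (2*s)) =
      (2*s) * (x ^ ((d:ℝ)-1) / ‖((x ^ (2*s) : ℝ) : ℂ) - lam‖ ^ p) := by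
    intro x hx
    have hx0 : 0 < x := hx
    have e1 : (x ^ (2*s)) ^ (α - 1) = x ^ ((2*s) * (α-1)) :=
      (Real.rpow_mul hx0.le (2*s) (α-1)).symm
    have hda : (2*s) * α = d := by
      rw [hαdef]
      field_simp
    have e2 : 2*s - 1 + (2*s) * (α-1) = (d:ℝ) - 1 := by nlinarith [hda]
    rw [smul_eq_mul, hgdef]
    simp only
    rw [abs_of_pos h2s, e1]
    rw [show (2*s) * x ^ (2*s-1) * (x ^ ((2*s)*(α-1)) / ‖((x ^ (2*s):ℝ):ℂ) - lam‖ ^ p)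
        = (2*s) * ((x ^ (2*s-1) * x ^ ((2*s)*(α-1))) / ‖((x ^ (2*s):ℝ):ℂ) - lam‖ ^ p)
      from by ring]
    rw [← Real.rpow_add hx0, e2]
  have hL : ∫ x in Ioi (0:ℝ),
      (2*s) * (x ^ ((d:ℝ)-1) / ‖((x ^ (2*s) : ℝ) : ℂ) - lam‖ ^ p)
      = ∫ y in Ioi (0:ℝ), g y := by
    rw [← hcv]
    exact (setIntegral_congr_fun measurableSet_Ioi hcong).symm
  have hI : ∫ x in Ioi (0:ℝ), x ^ ((d:ℝ)-1) / ‖((x ^ (2*s) : ℝ) : ℂ) - lam‖ ^ p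
      = (1/(2*s)) * ∫ y in Ioi (0:ℝ), g y := by
    rw [← hL, integral_const_mul, ← mul_assoc]
    field_simp
  -- compare g with G
  have hmono : ∫ y in Ioi (0:ℝ), g y ≤ 2^p * ∫ u in Ioi (0:ℝ), G u := by
    rw [← integral_const_mul]
    apply integral_mono_of_nonneg
    · filter_upwards [ae_restrict_mem measurableSet_Ioi] with u hu
      have hu0 : 0 < u := hu
      exact div_nonneg (Real.rpow_nonneg hu0.le _) (Real.rpow_nonneg (norm_nonneg _) _)
    · exact hGint.const_mul _
    · filter_upwards [ae_restrict_mem measurableSet_Ioi] with u hu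
      exact hg_le u hu
  -- split and bound the model integral
  have hsplit : ∫ u in Ioi (0:ℝ), G u = (∫ u in Ioc (0:ℝ) (2*M), G u) + ∫ u in Ioi (2*M), G u := by
    rw [← setIntegral_union (Set.Ioc_disjoint_Ioi le_rfl) measurableSet_Ioi hGi1 hGi2,
      Set.Ioc_union_Ioi_eq_Ioi (by linarith : (0:ℝ) ≤ 2*M)]
  have hnear : ∫ u in Ioc (0:ℝ) (2*M), G u ≤ (2*M)^(α-1) * (2 * (δ^(1-p)/(p-1))) := by
    have step1 : ∫ u in Ioc (0:ℝ) (2*M), G u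
        ≤ ∫ u in Ioc (0:ℝ) (2*M), (2*M)^(α-1) * (δ + |u - M|) ^ (-p) := by
      apply setIntegral_mono_on hGi1 (hcont_den.integrableOn_Ioc.const_mul _) measurableSet_Ioc
      intro u hu
      exact mul_le_mul_of_nonneg_right
        (Real.rpow_le_rpow hu.1.le hu.2 (by linarith)) (Real.rpow_nonneg (by positivity) _)
    calc ∫ u in Ioc (0:ℝ) (2*M), G u
        ≤ ∫ u in Ioc (0:ℝ) (2*M), (2*M)^(α-1) * (δ + |u - M|) ^ (-p) := step1
      _ = (2*M)^(α-1) * ∫ u in Ioc (0:ℝ) (2*M), (δ + |u - M|) ^ (-p) := integral_const_mul _ _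
      _ ≤ (2*M)^(α-1) * (2 * (δ^(1-p)/(p-1))) := by
          apply mul_le_mul_of_nonneg_left (nearInt7 hδpos hM hp1) (Real.rpow_nonneg (by positivity) _)
  have htail : ∫ u in Ioi (2*M), G u ≤ 2^p * ((2*M)^(α-p)/(p-α)) := by
    have step1 : ∫ u in Ioi (2*M), G u ≤ ∫ u in Ioi (2*M), 2^p * u ^ (α-1-p) :=
      setIntegral_mono_on hGi2 hbound measurableSet_Ioi hGle
    have step2 : ∫ u in Ioi (2*M), (2:ℝ)^p * u ^ (α-1-p)
        = 2^p * (-(2*M) ^ (α-1-p+1) / (α-1-p+1)) := by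
      rw [integral_const_mul, integral_Ioi_rpow_of_lt (by linarith) (by linarith)]
    have e3 : α-1-p+1 = α-p := by ring
    have e4 : -(2*M) ^ (α-p) / (α-p) = (2*M)^(α-p)/(p-α) := by
      rw [div_eq_div_iff (by intro h; apply absurd h; intro h'; nlinarith : α-p ≠ 0) (by nlinarith : p-α ≠ 0)]
      ring
    rw [step2, e3, e4] at step1
    exact step1
  -- assemble
  have hM1 : (2*M)^(α-1) = 2^(α-1) * M^(α-1) := Real.mul_rpow (by norm_num) hM.le
  have hM2 : (2*M)^(α-p) ≤ 2^(α-p) * (M^(α-1) * δ^(1-p)) := by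
    have e : (2*M)^(α-p) = 2^(α-p) * (M^(α-1) * M^(1-p)) := by
      rw [Real.mul_rpow (by norm_num) hM.le, ← Real.rpow_add hM]
      ring_nf
    rw [e]
    have : M^(1-p) ≤ δ^(1-p) := Real.rpow_le_rpow_of_nonpos hδpos hδM (by linarith)
    have h1 : M^(α-1) * M^(1-p) ≤ M^(α-1) * δ^(1-p) :=
      mul_le_mul_of_nonneg_left this (Real.rpow_nonneg hM.le _)
    exact mul_le_mul_of_nonneg_left h1 (Real.rpow_nonneg (by norm_num) _)
  have hpα : 0 < p - α := by linarith
  have hGtotal : ∫ u in Ioi (0:ℝ), G u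
      ≤ (2^(α-1) * (2/(p-1)) + 2^p * 2^(α-p) / (p-α)) * (M^(α-1) * δ^(1-p)) := by
    rw [hsplit]
    have t1 : (2*M)^(α-1) * (2 * (δ^(1-p)/(p-1)))
        = (2^(α-1) * (2/(p-1))) * (M^(α-1) * δ^(1-p)) := by
      rw [hM1]; ring
    have t2 : 2^p * ((2*M)^(α-p)/(p-α)) ≤ (2^p * 2^(α-p)/(p-α)) * (M^(α-1) * δ^(1-p)) := by
      have h1 : (2*M)^(α-p)/(p-α) ≤ 2^(α-p) * (M^(α-1) * δ^(1-p)) / (p-α) := by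
        gcongr
      calc 2^p * ((2*M)^(α-p)/(p-α)) ≤ 2^p * (2^(α-p) * (M^(α-1) * δ^(1-p)) / (p-α)) :=
            mul_le_mul_of_nonneg_left h1 (Real.rpow_nonneg (by norm_num) _)
        _ = (2^p * 2^(α-p)/(p-α)) * (M^(α-1) * δ^(1-p)) := by ring
    have := hnear
    rw [t1] at this
    nlinarith [htail, t2]
  -- final computation
  rw [hI]
  have hfin : (1/(2*s)) * ∫ y in Ioi (0:ℝ), g y
      ≤ (1/(2*s)) * (2^p * ((2^(α-1) * (2/(p-1)) + 2^p * 2^(α-p) / (p-α)) * (M^(α-1) * δ^(1-p)))) := by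
    apply mul_le_mul_of_nonneg_left _ (by positivity)
    calc ∫ y in Ioi (0:ℝ), g y ≤ 2^p * ∫ u in Ioi (0:ℝ), G u := hmono
      _ ≤ 2^p * ((2^(α-1) * (2/(p-1)) + 2^p * 2^(α-p) / (p-α)) * (M^(α-1) * δ^(1-p))) :=
          mul_le_mul_of_nonneg_left hGtotal (Real.rpow_nonneg (by norm_num) _)
  have hrhs : (1/(2*s)) * (2^p * (2^(α-1) * (2/(p-1)) + 2^p * 2^(α-p) / (p-α))) * M^(α-1) / δ^(p-1)
      = (1/(2*s)) * (2^p * ((2^(α-1) * (2/(p-1)) + 2^p * 2^(α-p) / (p-α)) * (M^(α-1) * δ^(1-p)))) := by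
    have : δ^(1-p) = (δ^(p-1))⁻¹ := by
      rw [← Real.rpow_neg hδpos.le]
      ring_nf
    rw [this]
    field_simp
  rw [hrhs]
  exact hfin
end

section
/- Let d ≥ 1, s > d/2, p > 1, and λ ∈ ℂ \ [0,∞). Then there is a constant N depending only on d, p, s such that ∫₀^∞ r^(d-1)/|r^(2s) - λ|^p dr ≤ N / d(λ,[0,∞))^(p - d/(2s)). -/
open MeasureTheory

section Aux

open Real Set

private lemma aux_meas (c e a : ℝ) : Measurable (fun v : ℝ => v ^ c * |v - a| ^ e) := by
  measurability

private lemma aux_mono {S : Set ℝ} (hS : MeasurableSet S) {f g : ℝ → ℝ}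
    (hg : IntegrableOn g S) (hf : Measurable f) (h : ∀ x ∈ S, |f x| ≤ g x) :
    IntegrableOn f S := by
  refine hg.mono' hf.aestronglyMeasurable ?_
  refine (ae_restrict_iff' hS).2 (Filter.Eventually.of_forall ?_)
  simpa [Real.norm_eq_abs] using h

private lemma lemA {α β : ℝ} (hα0 : 0 < α) (hβα : α < β) (hβ1 : β < 1) :
    IntegrableOn (fun v : ℝ => v ^ (α - 1) * |v - 1| ^ (-β)) (Ioi 0) := by
  have hβ0 : 0 < β := hα0.trans hβα
  have hα1 : α < 1 := hβα.trans hβ1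
  have h2 : Ioi (0:ℝ) = Ioc 0 2 ∪ Ioi 2 := (Ioc_union_Ioi_eq_Ioi (by norm_num)).symm
  have hsplit : Ioc (0:ℝ) 2 = Ioc 0 (1/2) ∪ (Ioc (1/2) 1 ∪ Ioc 1 2) := by
    rw [Ioc_union_Ioc_eq_Ioc (by norm_num) (by norm_num),
      Ioc_union_Ioc_eq_Ioc (by norm_num) (by norm_num)]
  rw [h2]
  refine IntegrableOn.union (hsplit ▸ IntegrableOn.union ?_ (IntegrableOn.union ?_ ?_)) ?_
  · -- Ioc 0 (1/2), dominated by 2^β * v^(α-1)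
    refine aux_mono (g := fun v => 2 ^ β * v ^ (α - 1)) measurableSet_Ioc ?_
      (aux_meas _ _ _) ?_
    · refine (Integrable.const_mul ?_ _)
      have := (intervalIntegral.intervalIntegrable_rpow' (show (-1:ℝ) < α - 1 by linarith)
        (a := 0) (b := 1/2))
      rwa [intervalIntegrable_iff_integrableOn_Ioc_of_le (by norm_num)] at this
    · intro x hx
      have hx0 : 0 < x := hx.1
      have h1x : (1:ℝ)/2 ≤ |x - 1| := by
        rw [abs_of_nonpos (by linarith [hx.2] : x - 1 ≤ 0)]
        linarith [hx.2]
      have hb : |x - 1| ^ (-β) ≤ (1/2 : ℝ) ^ (-β) :=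
        rpow_le_rpow_of_nonpos (by norm_num) h1x (by linarith)
      have he : ((1:ℝ)/2) ^ (-β) = 2 ^ β := by
        rw [one_div, inv_rpow (by norm_num), ← rpow_neg (by norm_num), neg_neg]
      rw [abs_of_nonneg (mul_nonneg (rpow_nonneg hx0.le _) (rpow_nonneg (abs_nonneg _) _)),
        mul_comm ((2:ℝ) ^ β)]
      exact mul_le_mul_of_nonneg_left (he ▸ hb) (rpow_nonneg hx0.le _)
  · -- Ioc (1/2) 1, dominated by 2^(1-α) * (1-v)^(-β)
    refine aux_mono (g := fun v => 2 ^ (1 - α) * (1 - v) ^ (-β)) measurableSet_Ioc ?_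
      (aux_meas _ _ _) ?_
    · refine (Integrable.const_mul ?_ _)
      have := (intervalIntegral.intervalIntegrable_rpow' (show (-1:ℝ) < -β by linarith)
        (a := 0) (b := 1/2)).comp_sub_left 1
      rw [intervalIntegrable_iff] at this
      rw [uIoc] at this
      refine this.congr_set_ae (by norm_num; exact Filter.EventuallyEq.rfl)
    · intro x hx
      have hx0 : (0:ℝ) < x := lt_trans (by norm_num) hx.1
      have habs : |x - 1| = 1 - x := by
        rw [abs_of_nonpos (by linarith [hx.2] : x - 1 ≤ 0)]; ring
      have hb : x ^ (α - 1) ≤ (1/2 : ℝ) ^ (α - 1) :=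
        rpow_le_rpow_of_nonpos (by norm_num) hx.1.le (by linarith)
      have he : ((1:ℝ)/2) ^ (α - 1) = 2 ^ (1 - α) := by
        rw [one_div, inv_rpow (by norm_num), ← rpow_neg (by norm_num), neg_sub]
      rw [abs_of_nonneg (mul_nonneg (rpow_nonneg hx0.le _) (rpow_nonneg (abs_nonneg _) _)),
        habs]
      exact mul_le_mul_of_nonneg_right (he ▸ hb) (rpow_nonneg (by linarith [hx.2]) _)
  · -- Ioc 1 2, dominated by (v-1)^(-β)
    refine aux_mono (g := fun v => (v - 1) ^ (-β)) measurableSet_Ioc ?_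
      (aux_meas _ _ _) ?_
    · have := (intervalIntegral.intervalIntegrable_rpow' (show (-1:ℝ) < -β by linarith)
        (a := 0) (b := 1)).comp_sub_right 1
      rw [intervalIntegrable_iff] at this
      rw [uIoc] at this
      refine this.congr_set_ae (by norm_num; exact Filter.EventuallyEq.rfl)
    · intro x hx
      have hx0 : (0:ℝ) < x := lt_trans (by norm_num) hx.1
      have habs : |x - 1| = x - 1 := abs_of_nonneg (by linarith [hx.1.le])
      have hb : x ^ (α - 1) ≤ 1 := by
        have := rpow_le_rpow_of_nonpos zero_lt_one hx.1.le
          (show α - 1 ≤ 0 by linarith)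
        simpa using this
      rw [abs_of_nonneg (mul_nonneg (rpow_nonneg hx0.le _) (rpow_nonneg (abs_nonneg _) _)),
        habs]
      calc x ^ (α - 1) * (x - 1) ^ (-β) ≤ 1 * (x - 1) ^ (-β) :=
            mul_le_mul_of_nonneg_right hb (rpow_nonneg (by linarith [hx.1.le]) _)
        _ = (x - 1) ^ (-β) := one_mul _
  · -- Ioi 2, dominated by 2^β * v^(α-1-β)
    refine aux_mono (g := fun v => 2 ^ β * v ^ (α - 1 - β)) measurableSet_Ioi ?_
      (aux_meas _ _ _) ?_
    · exact (integrableOn_Ioi_rpow_of_lt (by linarith) (by norm_num)).const_mul _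
    · intro x hx
      have hx2 : (2:ℝ) < x := hx
      have hx0 : (0:ℝ) < x := by linarith
      have habs : |x - 1| = x - 1 := abs_of_nonneg (by linarith)
      have hhalf : x / 2 ≤ x - 1 := by linarith
      have hb : |x - 1| ^ (-β) ≤ (x / 2) ^ (-β) := by
        rw [habs]
        exact rpow_le_rpow_of_nonpos (by linarith) hhalf (by linarith)
      have he : (x / 2) ^ (-β) = 2 ^ β * x ^ (-β) := by
        rw [div_rpow hx0.le (by norm_num), div_eq_mul_inv, ← rpow_neg (by norm_num), neg_neg,
          mul_comm]
      rw [abs_of_nonneg (mul_nonneg (rpow_nonneg hx0.le _) (rpow_nonneg (abs_nonneg _) _))]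
      calc x ^ (α - 1) * |x - 1| ^ (-β) ≤ x ^ (α - 1) * (2 ^ β * x ^ (-β)) :=
            mul_le_mul_of_nonneg_left (he ▸ hb) (rpow_nonneg hx0.le _)
        _ = 2 ^ β * (x ^ (α - 1) * x ^ (-β)) := by ring
        _ = 2 ^ β * x ^ (α - 1 - β) := by
            rw [← rpow_add hx0]; ring_nf

private lemma lemB_ptwise {α β a x : ℝ} (ha : 0 < a) (hx : 0 < x) :
    (a*x) ^ (α-1) * |a*x - a| ^ (-β)
      = (a ^ (α-1) * a ^ (-β)) * (x ^ (α-1) * |x - 1| ^ (-β)) := by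
  have h1 : (a*x) ^ (α-1) = a ^ (α-1) * x ^ (α-1) := mul_rpow ha.le hx.le
  have h2 : |a*x - a| = a * |x - 1| := by
    rw [show a*x - a = a * (x - 1) by ring, abs_mul, abs_of_pos ha]
  rw [h1, h2, mul_rpow ha.le (abs_nonneg _)]
  ring

private lemma lemB_int {α β a : ℝ} (ha : 0 < a) (hα0 : 0 < α) (hβα : α < β) (hβ1 : β < 1) :
    IntegrableOn (fun v : ℝ => v ^ (α - 1) * |v - a| ^ (-β)) (Ioi 0) := by
  rw [show Ioi (0:ℝ) = Ioi (a * 0) by rw [mul_zero],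
    ← integrableOn_Ioi_comp_mul_left_iff _ 0 ha]
  have hI : IntegrableOn
      (fun x : ℝ => (a ^ (α-1) * a ^ (-β)) * (x ^ (α-1) * |x - 1| ^ (-β))) (Ioi 0) :=
    (lemA hα0 hβα hβ1).const_mul _
  exact hI.congr_fun (fun x hx => (lemB_ptwise ha hx).symm) measurableSet_Ioi

private lemma lemB_val {α β a : ℝ} (ha : 0 < a) :
    ∫ v in Ioi (0:ℝ), v ^ (α - 1) * |v - a| ^ (-β)
      = a ^ (α - β) * ∫ v in Ioi (0:ℝ), v ^ (α - 1) * |v - 1| ^ (-β) := by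
  have h := integral_comp_mul_left_Ioi (fun v : ℝ => v ^ (α - 1) * |v - a| ^ (-β)) 0 ha
  rw [mul_zero] at h
  have h2 : (∫ x in Ioi (0:ℝ), (a*x) ^ (α-1) * |a*x - a| ^ (-β))
      = (a ^ (α-1) * a ^ (-β)) * ∫ x in Ioi (0:ℝ), x ^ (α-1) * |x - 1| ^ (-β) := by
    rw [← integral_const_mul]
    refine setIntegral_congr_fun measurableSet_Ioi fun x hx => ?_
    exact lemB_ptwise ha hx
  rw [h2] at h
  have := congrArg (fun z => a * z) h
  simp only [smul_eq_mul, ← mul_assoc] at this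
  rw [mul_inv_cancel₀ ha.ne', one_mul] at this
  have hc : a * a ^ (α-1) * a ^ (-β) = a ^ (α - β) := by
    rw [show α - β = 1 + (α-1) + (-β) by ring, rpow_add ha, rpow_add ha, rpow_one]
  rw [← this, ← hc]

private lemma lemC_ptwise {α β σ a : ℝ} {x : ℝ} (hx : 0 < x) :
    x ^ (σ - 1) * ((x ^ σ) ^ (α - 1) * |x ^ σ - a| ^ (-β))
      = x ^ (σ * α - 1) * |x ^ σ - a| ^ (-β) := by
  rw [← rpow_mul hx.le, ← mul_assoc, ← rpow_add hx]
  ring_nf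

private lemma lemC_int {α β σ a : ℝ} (hσ : 0 < σ)
    (h : IntegrableOn (fun v : ℝ => v ^ (α - 1) * |v - a| ^ (-β)) (Ioi 0)) :
    IntegrableOn (fun r : ℝ => r ^ (σ * α - 1) * |r ^ σ - a| ^ (-β)) (Ioi 0) := by
  have h2 := (integrableOn_Ioi_comp_rpow_iff'
    (fun v : ℝ => v ^ (α - 1) * |v - a| ^ (-β)) hσ.ne').2 h
  refine h2.congr_fun (fun x hx => ?_) measurableSet_Ioi
  simp only [smul_eq_mul]
  exact lemC_ptwise hx

private lemma lemC_val {α β σ a : ℝ} (hσ : 0 < σ) :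
    ∫ r in Ioi (0:ℝ), r ^ (σ * α - 1) * |r ^ σ - a| ^ (-β)
      = σ⁻¹ * ∫ v in Ioi (0:ℝ), v ^ (α - 1) * |v - a| ^ (-β) := by
  have h := integral_comp_rpow_Ioi_of_pos
    (g := fun v : ℝ => v ^ (α - 1) * |v - a| ^ (-β)) hσ
  have h2 : (∫ x in Ioi (0:ℝ),
        (σ * x ^ (σ - 1)) • ((x ^ σ) ^ (α - 1) * |x ^ σ - a| ^ (-β)))
      = σ * ∫ r in Ioi (0:ℝ), r ^ (σ * α - 1) * |r ^ σ - a| ^ (-β) := by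
    rw [← integral_const_mul]
    refine setIntegral_congr_fun measurableSet_Ioi fun x hx => ?_
    rw [smul_eq_mul, mul_assoc, lemC_ptwise hx]
  rw [h2] at h
  field_simp [hσ.ne'] at h ⊢
  linarith [h]

private lemma key_bound {p β δ : ℝ} {lam : ℂ} {u : ℝ} (hu : 0 < u)
    (hune : u ≠ ‖lam‖) (hδ : 0 < δ)
    (hδm : δ ≤ ‖(u : ℂ) - lam‖) (hβ0 : 0 < β) (hβp : β < p) :
    1 / ‖(u : ℂ) - lam‖ ^ p
      ≤ δ ^ (β - p) * |u - ‖lam‖| ^ (-β) := by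
  set m := ‖(u : ℂ) - lam‖ with hm
  set e := |u - ‖lam‖| with he
  have he0 : 0 < e := abs_pos.2 (sub_ne_zero.2 hune)
  have hm0 : 0 < m := hδ.trans_le hδm
  have hem : e ≤ m := by
    have h1 : |‖(u : ℂ)‖ - ‖lam‖| ≤ ‖(u : ℂ) - lam‖ := abs_norm_sub_norm_le _ _
    rw [Complex.norm_real, Real.norm_eq_abs, abs_of_pos hu] at h1
    exact h1
  have hlow : δ ^ (p - β) * e ^ β ≤ m ^ p := by
    have h2 : δ ^ (p - β) * e ^ β ≤ m ^ (p - β) * m ^ β :=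
      mul_le_mul (rpow_le_rpow hδ.le hδm (by linarith))
        (rpow_le_rpow he0.le hem hβ0.le) (rpow_nonneg he0.le _)
        (rpow_nonneg hm0.le _)
    rwa [← rpow_add hm0, sub_add_cancel] at h2
  have hpos : 0 < δ ^ (p - β) * e ^ β :=
    mul_pos (rpow_pos_of_pos hδ _) (rpow_pos_of_pos he0 _)
  calc 1 / m ^ p ≤ 1 / (δ ^ (p - β) * e ^ β) :=
        one_div_le_one_div_of_le hpos hlow
    _ = δ ^ (β - p) * e ^ (-β) := by
        rw [show β - p = -(p - β) by ring, rpow_neg hδ.le, rpow_neg he0.le,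
          one_div, mul_inv]

end Aux

open Real Set

theorem stmt_8 (d : ℕ) (hd : 1 ≤ d) (s p : ℝ) (hsd : (d : ℝ) / 2 < s) (hp : 1 < p) :
    ∃ N : ℝ, ∀ lam : ℂ, (¬ ∃ t : ℝ, 0 ≤ t ∧ (t : ℂ) = lam) →
      ∫ r in Set.Ioi (0 : ℝ), r ^ ((d : ℝ) - 1) / ‖((r ^ (2 * s) : ℝ) : ℂ) - lam‖ ^ p ≤
        N / Metric.infDist lam {w : ℂ | ∃ t : ℝ, 0 ≤ t ∧ w = (t : ℂ)} ^ (p - (d : ℝ) / (2 * s)) := by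
  have hd1 : (1:ℝ) ≤ (d:ℝ) := by exact_mod_cast hd
  have hs0 : 0 < s := lt_of_le_of_lt (by linarith) hsd
  have hσ : 0 < 2 * s := by linarith
  set α : ℝ := (d : ℝ) / (2 * s) with hαdef
  have hα0 : 0 < α := div_pos (by linarith) hσ
  have hα1 : α < 1 := by rw [hαdef, div_lt_one hσ]; linarith
  set β : ℝ := (α + 1) / 2 with hβdef
  have hβα : α < β := by rw [hβdef]; linarith
  have hβ1 : β < 1 := by rw [hβdef]; linarith
  have hβ0 : 0 < β := hα0.trans hβα
  have hβp : β < p := by linarith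
  have hσα : 2 * s * α = (d:ℝ) := by
    rw [hαdef]; field_simp
  set J1 := ∫ v in Ioi (0:ℝ), v ^ (α - 1) * |v - 1| ^ (-β) with hJ
  have hJ0 : 0 ≤ J1 := setIntegral_nonneg measurableSet_Ioi fun x hx =>
    mul_nonneg (rpow_nonneg (le_of_lt hx) _) (rpow_nonneg (abs_nonneg _) _)
  refine ⟨(2*s)⁻¹ * J1, fun lam hlam => ?_⟩
  set S := {w : ℂ | ∃ t : ℝ, 0 ≤ t ∧ w = (t : ℂ)} with hSdef
  have hS0 : (0:ℂ) ∈ S := ⟨0, le_refl _, by simp⟩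
  have hSclosed : IsClosed S := by
    have hSim : S = Complex.ofReal '' Ici 0 := by
      ext w
      constructor
      · rintro ⟨t, ht, rfl⟩; exact ⟨t, ht, rfl⟩
      · rintro ⟨t, ht, rfl⟩; exact ⟨t, ht, rfl⟩
    rw [hSim]
    exact Complex.isometry_ofReal.isClosedEmbedding.isClosedMap _ isClosed_Ici
  have hlamS : lam ∉ S := fun ⟨t, ht, hw⟩ => hlam ⟨t, ht, hw.symm⟩
  set δ := Metric.infDist lam S with hδdef
  have hδ0 : 0 < δ := (hSclosed.notMem_iff_infDist_pos ⟨0, hS0⟩).1 hlamS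
  set a := ‖lam‖ with hadef
  have ha0 : 0 < a := norm_pos_iff.mpr (fun h => hlamS (by rw [h]; exact hS0))
  have hδa : δ ≤ a := by
    have h := Metric.infDist_le_dist_of_mem (x := lam) hS0
    rwa [Complex.dist_eq, sub_zero] at h
  have hBint : IntegrableOn (fun v : ℝ => v ^ (α - 1) * |v - a| ^ (-β)) (Ioi 0) :=
    lemB_int ha0 hα0 hβα hβ1
  have hGint : IntegrableOn
      (fun r : ℝ => r ^ ((d:ℝ) - 1) * |r ^ (2*s) - a| ^ (-β)) (Ioi 0) := by
    have h := lemC_int hσ hBint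
    rwa [hσα] at h
  have hmono : (∫ r in Ioi (0:ℝ),
        r ^ ((d : ℝ) - 1) / ‖((r ^ (2 * s) : ℝ) : ℂ) - lam‖ ^ p)
      ≤ ∫ r in Ioi (0:ℝ), δ^(β-p) * (r ^ ((d:ℝ)-1) * |r ^ (2*s) - a| ^ (-β)) := by
    refine integral_mono_of_nonneg ?_ (hGint.const_mul _) ?_
    · filter_upwards [ae_restrict_mem measurableSet_Ioi] with r hr
      exact div_nonneg (rpow_nonneg (le_of_lt hr) _)
        (rpow_nonneg (norm_nonneg _) _)
    · have hne : ∀ᵐ (r:ℝ), r ≠ a ^ (2*s)⁻¹ := by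
        have hset : {x : ℝ | ¬ x ≠ a ^ (2*s)⁻¹} = {a ^ (2*s)⁻¹} := by ext x; simp
        rw [ae_iff, hset]
        exact measure_singleton _
      filter_upwards [ae_restrict_mem measurableSet_Ioi, ae_restrict_of_ae hne]
        with r hr hrne
      have hr0 : 0 < r := hr
      have hu0 : 0 < r ^ (2*s) := rpow_pos_of_pos hr0 _
      have hune : r ^ (2*s) ≠ a := by
        intro h
        exact hrne (by rw [← h, rpow_rpow_inv hr0.le hσ.ne'])
      have hδm : δ ≤ ‖((r ^ (2*s) : ℝ) : ℂ) - lam‖ := by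
        have hmem : ((r ^ (2*s) : ℝ) : ℂ) ∈ S := ⟨r ^ (2*s), hu0.le, rfl⟩
        have h := Metric.infDist_le_dist_of_mem (x := lam) hmem
        rwa [Complex.dist_eq, show lam - ((r ^ (2*s) : ℝ) : ℂ)
          = -((((r ^ (2*s) : ℝ) : ℂ)) - lam) by ring, norm_neg] at h
      have hkey := key_bound hu0 hune hδ0 hδm hβ0 hβp
      calc r ^ ((d:ℝ)-1) / ‖((r ^ (2*s) : ℝ) : ℂ) - lam‖ ^ p
          = r ^ ((d:ℝ)-1) * (1 / ‖((r ^ (2*s) : ℝ) : ℂ) - lam‖ ^ p) := by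
            ring
        _ ≤ r ^ ((d:ℝ)-1) * (δ ^ (β-p) * |r ^ (2*s) - a| ^ (-β)) :=
            mul_le_mul_of_nonneg_left hkey (rpow_nonneg hr0.le _)
        _ = δ^(β-p) * (r ^ ((d:ℝ)-1) * |r ^ (2*s) - a| ^ (-β)) := by ring
  have hval : (∫ r in Ioi (0:ℝ), δ^(β-p) * (r ^ ((d:ℝ)-1) * |r ^ (2*s) - a| ^ (-β)))
      = δ^(β-p) * ((2*s)⁻¹ * (a^(α-β) * J1)) := by
    rw [integral_const_mul]
    congr 1
    have h1 : (∫ r in Ioi (0:ℝ), r ^ ((d:ℝ)-1) * |r ^ (2*s) - a| ^ (-β))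
        = (2*s)⁻¹ * ∫ v in Ioi (0:ℝ), v ^ (α-1) * |v - a| ^ (-β) := by
      have h := lemC_val (a := a) (α := α) (β := β) hσ
      rwa [hσα] at h
    rw [h1, lemB_val ha0]
  refine le_trans hmono ?_
  rw [hval]
  have hstep : a ^ (α - β) ≤ δ ^ (α - β) :=
    rpow_le_rpow_of_nonpos hδ0 hδa (by linarith)
  calc δ^(β-p) * ((2*s)⁻¹ * (a^(α-β) * J1))
      ≤ δ^(β-p) * ((2*s)⁻¹ * (δ^(α-β) * J1)) := by
        refine mul_le_mul_of_nonneg_left ?_ (rpow_nonneg hδ0.le _)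
        refine mul_le_mul_of_nonneg_left ?_ (by positivity)
        exact mul_le_mul_of_nonneg_right hstep hJ0
    _ = (2*s)⁻¹ * J1 * (δ^(β-p) * δ^(α-β)) := by ring
    _ = (2*s)⁻¹ * J1 / δ ^ (p - α) := by
        rw [← rpow_add hδ0, show β - p + (α - β) = -(p - α) by ring, rpow_neg hδ0.le,
          div_eq_mul_inv]
end

section
/- Let a > 0 and define g̃(λ) = 1/λ for λ ∈ ℂ \ [a,∞). Then d(g̃(λ), [0, 1/a]) ≥ (1/√5)·d(λ, [a,∞))/(|λ|·(a+|λ|)) for all λ ∈ ℂ \ [a,∞), λ ≠ 0. -/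
theorem stmt_13 (a : ℝ) (ha : 0 < a) (lam : ℂ)
    (hlam : ¬ ∃ t : ℝ, a ≤ t ∧ (t : ℂ) = lam) (h0 : lam ≠ 0) :
    1 / Real.sqrt 5 * Metric.infDist lam {w : ℂ | ∃ t : ℝ, a ≤ t ∧ w = (t : ℂ)} /
        (‖lam‖ * (a + ‖lam‖)) ≤
      Metric.infDist (1 / lam) {w : ℂ | ∃ t : ℝ, t ∈ Set.Icc 0 (1 / a) ∧ w = (t : ℂ)} := by
  set S : Set ℂ := {w : ℂ | ∃ t : ℝ, a ≤ t ∧ w = (t : ℂ)} with hS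
  set T : Set ℂ := {w : ℂ | ∃ t : ℝ, t ∈ Set.Icc 0 (1 / a) ∧ w = (t : ℂ)} with hT
  set A : ℝ := ‖lam‖ with hA
  have hApos : 0 < A := by
    simpa [hA] using (norm_pos_iff.mpr h0)
  set s5 : ℝ := Real.sqrt 5 with hs5
  have hs5pos : 0 < s5 := Real.sqrt_pos.mpr (by norm_num)
  have hs5ge : (2:ℝ) ≤ s5 := by
    rw [hs5, show (2:ℝ) = Real.sqrt 4 by
      rw [show (4:ℝ) = 2^2 by norm_num, Real.sqrt_sq (by norm_num)]]
    exact Real.sqrt_le_sqrt (by norm_num)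
  have hu : 1/s5 ≤ 1/2 := by
    rw [div_le_div_iff₀ hs5pos (by norm_num)]
    linarith
  have hupos : 0 < 1/s5 := by positivity
  set D : ℝ := Metric.infDist lam S with hD
  have hDnonneg : 0 ≤ D := Metric.infDist_nonneg
  have hDle : D ≤ a + A := by
    have hmem : (a : ℂ) ∈ S := ⟨a, le_refl a, rfl⟩
    have h1 := Metric.infDist_le_dist_of_mem (x := lam) hmem
    have hd : dist lam ((a:ℝ):ℂ) ≤ A + a := by
      rw [Complex.dist_eq]
      calc ‖lam - a‖ ≤ ‖lam‖ + ‖(a:ℂ)‖ :=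
            norm_sub_le lam a
        _ = A + a := by
            rw [← hA]
            congr 1
            simpa using abs_of_pos ha
    linarith
  have hTne : T.Nonempty := ⟨(0:ℂ), ⟨0, ⟨le_refl 0, by positivity⟩, by simp⟩⟩
  rw [← not_lt, Metric.infDist_lt_iff hTne]
  push_neg
  rintro w ⟨t, ⟨ht0, hta⟩, rfl⟩
  rcases le_or_gt (1 / (s5 * (a + A))) t with hbig | hsmall
  · -- t large case
    have htpos : 0 < t := lt_of_lt_of_le (by positivity) hbig
    have hmem : ((1/t : ℝ) : ℂ) ∈ S := by
      refine ⟨1/t, ?_, rfl⟩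
      rw [le_div_iff₀ htpos]
      calc a * t ≤ a * (1/a) := mul_le_mul_of_nonneg_left hta ha.le
        _ = 1 := by field_simp
    have hDd : D ≤ ‖lam - (1/t : ℝ)‖ := by
      have h2 := Metric.infDist_le_dist_of_mem (x := lam) hmem
      rwa [Complex.dist_eq] at h2
    have htne : (t:ℂ) ≠ 0 := by exact_mod_cast htpos.ne'
    have hkey : 1 / lam - (t:ℂ) = -((t:ℂ)/lam) * (lam - ((1/t:ℝ):ℂ)) := by
      push_cast
      field_simp
      ring
    have hdist : dist (1/lam) ((t:ℝ):ℂ) = t / A * ‖lam - ((1/t:ℝ):ℂ)‖ := by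
      rw [Complex.dist_eq, hkey]
      rw [norm_mul, norm_neg, norm_div]
      rw [← hA, Complex.norm_real, Real.norm_eq_abs, abs_of_pos htpos]
    rw [hdist]
    set X : ℝ := ‖lam - ((1/t:ℝ):ℂ)‖ with hX
    have hXnn : 0 ≤ X := norm_nonneg _
    have hbig2 : 1/s5 ≤ t * (a + A) := by
      have h3 := (div_le_iff₀ (by positivity : (0:ℝ) < s5 * (a + A))).mp hbig
      rw [div_le_iff₀ hs5pos]
      nlinarith
    have hrhs : t / A * X * (A * (a + A)) = t * X * (a + A) := by
      field_simp
    rw [div_le_iff₀ (by positivity : (0:ℝ) < A * (a + A)), hrhs]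
    nlinarith [mul_le_mul_of_nonneg_right hbig2 hDnonneg,
      mul_le_mul_of_nonneg_left hDd (mul_nonneg htpos.le (by positivity : (0:ℝ) ≤ a + A))]
  · -- t small case
    have hlb : 1/A - t ≤ dist (1/lam) ((t:ℝ):ℂ) := by
      have hns := norm_sub_norm_le (1/lam) ((t:ℝ):ℂ)
      rw [← dist_eq_norm] at hns
      have h1 : ‖1/lam‖ = 1/A := by rw [norm_div, norm_one]
      have h2 : ‖((t:ℝ):ℂ)‖ = t := by
        rw [Complex.norm_real, Real.norm_eq_abs, abs_of_nonneg ht0]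
      rw [h1, h2] at hns
      exact hns
    refine le_trans ?_ hlb
    have hsm2 : t * (a + A) ≤ 1/s5 := by
      have h3 : t * (s5 * (a + A)) < 1 :=
        (lt_div_iff₀ (by positivity : (0:ℝ) < s5 * (a + A))).mp hsmall
      rw [le_div_iff₀ hs5pos]
      nlinarith
    have hexp : (1/A - t) * (A * (a + A)) = (a + A) - t * (a + A) * A := by
      field_simp
    rw [div_le_iff₀ (by positivity : (0:ℝ) < A * (a + A)), hexp]
    nlinarith [mul_le_mul_of_nonneg_right hsm2 hApos.le,
      mul_le_mul_of_nonneg_left hDle (le_of_lt hupos),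
      mul_le_mul_of_nonneg_right hu (by positivity : (0:ℝ) ≤ a + 2*A)]
end
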